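/- Let d ≥ 1, 0 < α < 2, c₀ ≥ 0, let f : (0,∞) → ℝ be differentiable with f′(m) > 0 for all m > 0, and let V : 𝕋^d → ℝ. Define the congestion Hamiltonian H(x,p,m) = |p|²/(2(m+c₀)^α) − V(x) − f(m) and the congestion drift B(x,p,m) = m p/(m+c₀)^α. Then the Lions–Souganidis uniqueness condition holds strictly: for every x ∈ 𝕋^d, p ∈ ℝ^d, m > 0, and every ξ ∈ ℝ^d with ξ ≠ 0, one has −4 H_m(x,p,m) · ξᵀD_pB(x,p,m)ξ > ( (B_m(x,p,m) − D_pH(x,p,m))·ξ )². Explicitly: 2αm|p|²|ξ|²/(m+c₀)^{2α+1} + 4f′(m)m|ξ|²/(m+c₀)^α > α²m²(p·ξ)²/(m+c₀)^{2α+2}. -/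

import Mathlib

open Set Function MeasureTheory Filter
open scoped Topology

noncomputable section

/-- `Ed d` is the ambient Euclidean space `ℝ^d`; the flat torus `𝕋^d` is modeled by
`ℤ^d`-periodic functions on `Ed d`. -/
abbrev Ed (d : ℕ) := EuclideanSpace ℝ (Fin d)

namespace EMFG

variable {d : ℕ}

/-- Euclidean scalar product. -/
def dotE {d : ℕ} (u v : Ed d) : ℝ := inner ℝ u v

/-- Periodicity with respect to the standard integer lattice: a function on `ℝ^d`
descends to the torus `𝕋^d`. -/
def XPeriodic {α : Type*} (f : Ed d → α) : Prop :=
  ∀ (x : Ed d) (i : Fin d), f (x + EuclideanSpace.single i (1:ℝ)) = f x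

/-! Partial derivatives of a scalar Hamiltonian `H = H(x,p,m)`. -/

/-- `H_m` -/
def dm (H : Ed d → Ed d → ℝ → ℝ) (x p : Ed d) (m : ℝ) : ℝ :=
  deriv (fun m' => H x p m') m

/-- `H_{mm}` -/
def dmm (H : Ed d → Ed d → ℝ → ℝ) (x p : Ed d) (m : ℝ) : ℝ :=
  deriv (fun m' => dm H x p m') m

/-- `D_p H` (as a vector). -/
def gradp (H : Ed d → Ed d → ℝ → ℝ) (x p : Ed d) (m : ℝ) : Ed d :=
  gradient (fun p' => H x p' m) p

/-- `D_x H` (as a vector). -/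
def gradx (H : Ed d → Ed d → ℝ → ℝ) (x p : Ed d) (m : ℝ) : Ed d :=
  gradient (fun x' => H x' p m) x

/-- `D²_{pp} H` -/
def hesspp (H : Ed d → Ed d → ℝ → ℝ) (x p : Ed d) (m : ℝ) : Ed d →L[ℝ] Ed d :=
  fderiv ℝ (fun p' => gradp H x p' m) p

/-- `D²_{xx} H` -/
def hessxx (H : Ed d → Ed d → ℝ → ℝ) (x p : Ed d) (m : ℝ) : Ed d →L[ℝ] Ed d :=
  fderiv ℝ (fun x' => gradx H x' p m) x

/-- `D²_{xp} H` -/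
def hessxp (H : Ed d → Ed d → ℝ → ℝ) (x p : Ed d) (m : ℝ) : Ed d →L[ℝ] Ed d :=
  fderiv ℝ (fun x' => gradp H x' p m) x

/-- `D_p H_m` -/
def gradpdm (H : Ed d → Ed d → ℝ → ℝ) (x p : Ed d) (m : ℝ) : Ed d :=
  gradient (fun p' => dm H x p' m) p

/-- `D_x H_m` -/
def gradxdm (H : Ed d → Ed d → ℝ → ℝ) (x p : Ed d) (m : ℝ) : Ed d :=
  gradient (fun x' => dm H x' p m) x

/-! Partial derivatives of a vector field `B = B(x,p,m) ∈ ℝ^d`. -/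

/-- `B_m` -/
def vdm (B : Ed d → Ed d → ℝ → Ed d) (x p : Ed d) (m : ℝ) : Ed d :=
  deriv (fun m' => B x p m') m

/-- `B_{mm}` -/
def vdmm (B : Ed d → Ed d → ℝ → Ed d) (x p : Ed d) (m : ℝ) : Ed d :=
  deriv (fun m' => vdm B x p m') m

/-- `D_p B` -/
def jacp (B : Ed d → Ed d → ℝ → Ed d) (x p : Ed d) (m : ℝ) : Ed d →L[ℝ] Ed d :=
  fderiv ℝ (fun p' => B x p' m) p

/-- `D_x B` -/
def jacx (B : Ed d → Ed d → ℝ → Ed d) (x p : Ed d) (m : ℝ) : Ed d →L[ℝ] Ed d :=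
  fderiv ℝ (fun x' => B x' p m) x

/-- `D_p B_m` -/
def jacpdm (B : Ed d → Ed d → ℝ → Ed d) (x p : Ed d) (m : ℝ) : Ed d →L[ℝ] Ed d :=
  fderiv ℝ (fun p' => vdm B x p' m) p

/-- `D_x B_m` -/
def jacxdm (B : Ed d → Ed d → ℝ → Ed d) (x p : Ed d) (m : ℝ) : Ed d →L[ℝ] Ed d :=
  fderiv ℝ (fun x' => vdm B x' p m) x

/-- `D²_{pp} B` -/
def hessppB (B : Ed d → Ed d → ℝ → Ed d) (x p : Ed d) (m : ℝ) :
    Ed d →L[ℝ] Ed d →L[ℝ] Ed d :=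
  fderiv ℝ (fun p' => jacp B x p' m) p

/-- `D²_{xx} B` -/
def hessxxB (B : Ed d → Ed d → ℝ → Ed d) (x p : Ed d) (m : ℝ) :
    Ed d →L[ℝ] Ed d →L[ℝ] Ed d :=
  fderiv ℝ (fun x' => jacx B x' p m) x

/-- `D²_{xp} B` -/
def hessxpB (B : Ed d → Ed d → ℝ → Ed d) (x p : Ed d) (m : ℝ) :
    Ed d →L[ℝ] Ed d →L[ℝ] Ed d :=
  fderiv ℝ (fun x' => jacp B x' p m) x

/-- `div_x B` (at frozen `p`, `m`). -/
def divx (B : Ed d → Ed d → ℝ → Ed d) (x p : Ed d) (m : ℝ) : ℝ :=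
  ∑ i, (jacx B x p m (EuclideanSpace.single i (1:ℝ))) i

/-- The time derivative `u_t`, taken within the time interval `[0,T]`. -/
def tderiv (T : ℝ) (u : Ed d → ℝ → ℝ) (x : Ed d) (t : ℝ) : ℝ :=
  derivWithin (u x) (Icc 0 T) t

/-- The spatial gradient `D_x u`. -/
def sgrad (u : Ed d → ℝ → ℝ) (x : Ed d) (t : ℝ) : Ed d :=
  gradient (fun x' => u x' t) x

/-- The closed cylinder `Q̄_T = 𝕋^d × [0,T]` (lifted to `ℝ^d × [0,T]`). -/
def QTbar (d : ℕ) (T : ℝ) : Set (Ed d × ℝ) := univ ×ˢ Icc 0 T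

/-- `u ∈ C^n(Q̄_T)`. -/
def RegOn (n : ℕ) (T : ℝ) (u : Ed d → ℝ → ℝ) : Prop :=
  ContDiffOn ℝ n (fun z : Ed d × ℝ => u z.1 z.2) (QTbar d T)

/-- `u ∈ C^{k,s}(Q̄_T)`: `k` times continuously differentiable with `s`-Hölder
continuous `k`-th order derivatives. -/
def HolderRegOn (k : ℕ) (s T : ℝ) (u : Ed d → ℝ → ℝ) : Prop :=
  RegOn k T u ∧ ∃ C : NNReal,
    HolderOnWith C s.toNNReal
      (iteratedFDerivWithin ℝ k (fun z : Ed d × ℝ => u z.1 z.2) (QTbar d T)) (QTbar d T)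

/-- The full data and standing assumptions (M), (H), (B), (G), (E) of the paper,
together with the normalizations of Remark 2.1. -/
structure Setup (d : ℕ) where
  /-- the time horizon -/
  T : ℝ
  T_pos : 0 < T
  /-- the structural constant `C₀` -/
  C₀ : ℝ
  C₀_pos : 0 < C₀
  /-- growth exponents -/
  γ : ℝ
  γ₁ : ℝ
  γ₂ : ℝ
  hγ : 1 < γ
  hγ₁ : 0 ≤ γ₁
  hγ₂₁ : γ₂ ≤ γ₁
  hγ₁γ : γ₁ ≤ γ
  hγ₂ : γ₂ < 2 * γ₁ - γ + 2
  /-- the structural functions `C̄` and `ψ` on `(0,∞)` -/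
  Cb : ℝ → ℝ
  ψ : ℝ → ℝ
  Cb_pos : ∀ m : ℝ, 0 < m → 0 < Cb m
  ψ_pos : ∀ m : ℝ, 0 < m → 0 < ψ m
  Cb_cont : ContinuousOn Cb (Ioi 0)
  ψ_cont : ContinuousOn ψ (Ioi 0)
  ψ_mono : ∀ m₁ m₂ : ℝ, 0 < m₁ → m₁ ≤ m₂ → ψ m₂ ≤ ψ m₁
  ψ_lim : γ₁ < γ → ∃ ℓ : ℝ, 0 < ℓ ∧ Tendsto ψ atTop (𝓝 ℓ)
  /-- the initial density -/
  m₀ : Ed d → ℝ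
  m₀_per : XPeriodic m₀
  m₀_smooth : ContDiff ℝ 4 m₀
  m₀_pos : ∀ x, 0 < m₀ x
  m₀_int : ∫ x in {x : Ed d | ∀ i, x i ∈ Icc (0:ℝ) 1}, m₀ x = 1
  /-- the Hamiltonian -/
  H : Ed d → Ed d → ℝ → ℝ
  H_per : ∀ (p : Ed d) (m : ℝ), XPeriodic (fun x => H x p m)
  H_smooth : ContDiffOn ℝ 4 (fun z : Ed d × Ed d × ℝ => H z.1 z.2.1 z.2.2)
      (univ ×ˢ univ ×ˢ Ioi 0)
  Hm_neg : ∀ (x p : Ed d) (m : ℝ), 0 < m → dm H x p m < 0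
  H1 : ∀ (x p : Ed d) (m : ℝ), 0 < m → ∀ ξ : Ed d,
      C₀⁻¹ * ψ m * (1 + ‖p‖) ^ (γ - 2) * ‖ξ‖ ^ 2 ≤ dotE (hesspp H x p m ξ) ξ ∧
      dotE (hesspp H x p m ξ) ξ ≤ C₀ * ψ m * (1 + ‖p‖) ^ (γ - 2) * ‖ξ‖ ^ 2
  H2a : ∀ (x p : Ed d) (m : ℝ), 0 < m →
      ‖gradp H x p m‖ ≤ C₀ * ψ m * (1 + ‖p‖) ^ (γ - 1)
  H2b : ∀ (x p : Ed d) (m : ℝ), 0 < m →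
      (1 + C₀⁻¹) * H x p m - Cb m ≤ dotE (gradp H x p m) p
  HM1 : ∀ (x p : Ed d) (m : ℝ), 0 < m →
      C₀⁻¹ * ψ m * ‖p‖ ^ γ₁ ≤ -(m * dm H x p m) ∧
      -(m * dm H x p m) ≤ C₀ * ψ m * ‖p‖ ^ γ₁ + Cb m
  HM2 : ∀ (x p : Ed d) (m : ℝ), 0 < m →
      |m * dmm H x p m| ≤ -(C₀ * dm H x p m) ∧
      ‖p‖ * ‖gradpdm H x p m‖ ≤ -(C₀ * dm H x p m)
  HX1 : ∀ (x p : Ed d) (m : ℝ), 0 < m →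
      ‖gradx H x p m‖ ≤ C₀ * ψ m * (1 + ‖p‖) ^ γ₂ ∧
      ‖hessxx H x p m‖ ≤ C₀ * ψ m * (1 + ‖p‖) ^ γ₂ ∧
      ‖hessxp H x p m‖ ≤ C₀ * ψ m * (1 + ‖p‖) ^ (γ₂ - 1)
  HX2 : ∀ (x p : Ed d) (m : ℝ), 0 < m →
      m * ‖gradxdm H x p m‖ ≤ C₀ * ψ m * (1 + ‖p‖) ^ γ₂
  HX3 : ∀ (x : Ed d) (m : ℝ), 0 < m → ‖gradx H x 0 m‖ ≤ C₀
  /-- the drift vector field -/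
  B : Ed d → Ed d → ℝ → Ed d
  B_per : ∀ (p : Ed d) (m : ℝ), XPeriodic (fun x => B x p m)
  B_smooth : ContDiffOn ℝ 4 (fun z : Ed d × Ed d × ℝ => B z.1 z.2.1 z.2.2)
      (univ ×ˢ univ ×ˢ Ici 0)
  B_zero : ∀ x p : Ed d, B x p 0 = 0
  B1 : ∀ (x p : Ed d) (m : ℝ), 0 < m → ∀ ξ : Ed d,
      C₀⁻¹ * m * ψ m * ‖p‖ ^ (γ - 2) * ‖ξ‖ ^ 2 ≤ dotE (jacp B x p m ξ) ξ ∧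
      dotE (jacp B x p m ξ) ξ ≤ C₀ * m * ψ m * (1 + ‖p‖) ^ (γ - 2) * ‖ξ‖ ^ 2
  B2 : ∀ (x p : Ed d) (m : ℝ), 0 < m →
      ‖vdm B x p m‖ ≤ C₀ * ψ m * (1 + ‖p‖) ^ (γ - 1) ∧
      ‖jacpdm B x p m‖ ≤ C₀ * ψ m * (1 + ‖p‖) ^ (γ - 2) ∧
      ‖hessppB B x p m‖ ≤ C₀ * m * ψ m * (1 + ‖p‖) ^ (γ - 3)
  BM : ∀ (x p : Ed d) (m : ℝ), 0 < m →
      ‖vdmm B x p m‖ ≤ -(C₀ * (1 + ‖p‖) * dm H x p m)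
  BX1 : ∀ (x p : Ed d) (m : ℝ), 0 < m →
      ‖jacx B x p m‖ ≤ C₀ * m * ψ m * (1 + ‖p‖) ^ (γ₂ - 1) ∧
      ‖hessxxB B x p m‖ ≤ C₀ * m * ψ m * (1 + ‖p‖) ^ (γ₂ - 1) ∧
      ‖jacxdm B x p m‖ ≤ C₀ * ψ m * (1 + ‖p‖) ^ (γ₂ - 1)
  BX2 : ∀ (x p : Ed d) (m : ℝ), 0 < m →
      ‖hessxpB B x p m‖ ≤ C₀ * m * ψ m * (1 + ‖p‖) ^ (γ₂ - 2)
  BX3 : ∀ (x : Ed d) (m : ℝ), 0 < m → ‖jacx B x 0 m‖ ≤ C₀ * m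
  /-- the terminal coupling -/
  g : Ed d → ℝ → ℝ
  g_per : ∀ m : ℝ, XPeriodic (fun x => g x m)
  g_smooth : ContDiffOn ℝ 4 (fun z : Ed d × ℝ => g z.1 z.2) (univ ×ˢ Ioi 0)
  gm_pos : ∀ (x : Ed d) (m : ℝ), 0 < m → 0 < deriv (g x) m
  /-- `sup g` and `inf g`: the common limits of `g(x,·)` at `∞` and `0⁺` (assumption (G)) -/
  gSup : ℝ
  gInf : ℝ
  g_lim_top : ∀ x : Ed d, Tendsto (g x) atTop (𝓝 gSup)
  g_lim_bot : ∀ x : Ed d, Tendsto (g x) (𝓝[>] 0) (𝓝 gInf)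
  /-- (E1) -/
  E1 : ∀ M : ℝ, ∃ δ : ℝ, 0 < δ ∧ ∀ (x p : Ed d) (m : ℝ), 0 < m → m < δ → M ≤ H x p m
  /-- (E2) -/
  E2 : ∀ M : ℝ, ∃ R : ℝ, ∀ (x p : Ed d) (m : ℝ), 0 < m → R ≤ m →
      H x p m - C₀ * ψ m * ‖p‖ ^ γ ≤ -M
  /-- (E3), strict form of the uniqueness condition -/
  E3 : ∀ (x p : Ed d) (m : ℝ), 0 < m → ∀ ξ : Ed d, ξ ≠ 0 →
      (1 + C₀⁻¹) * (dotE (vdm B x p m - gradp H x p m) ξ) ^ 2 <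
        -(4 * dm H x p m) * dotE (jacp B x p m ξ) ξ
  /-- normalization (2.4) -/
  Hgrowth : ∀ (x p : Ed d) (m : ℝ), 0 < m →
      C₀⁻¹ * ψ m * ‖p‖ ^ γ - Cb m ≤ H x p m ∧ H x p m ≤ C₀ * ψ m * ‖p‖ ^ γ + Cb m
  /-- normalization (2.5) -/
  Hnorm : ∀ (x : Ed d) (m : ℝ), m ∈ Icc (⨅ y, m₀ y) (⨆ y, m₀ y) → |H x 0 m| ≤ C₀
  Bnorm : ∀ (x : Ed d) (m : ℝ), m ∈ Icc (⨅ y, m₀ y) (⨆ y, m₀ y) → ‖B x 0 m‖ ≤ C₀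

/-- `(u,m)` is a classical solution of the (EMFG) system (regularity stated separately). -/
structure IsSol (S : Setup d) (u m : Ed d → ℝ → ℝ) : Prop where
  u_per : ∀ t : ℝ, XPeriodic (fun x => u x t)
  m_per : ∀ t : ℝ, XPeriodic (fun x => m x t)
  m_pos : ∀ (x : Ed d) (t : ℝ), t ∈ Icc 0 S.T → 0 < m x t
  hjb : ∀ (x : Ed d) (t : ℝ), t ∈ Ioo 0 S.T →
      -(tderiv S.T u x t) + S.H x (sgrad u x t) (m x t) = 0
  kfp : ∀ (x : Ed d) (t : ℝ), t ∈ Ioo 0 S.T →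
      tderiv S.T m x t -
        ∑ i, ((fderiv ℝ (fun x' => S.B x' (sgrad u x' t) (m x' t)) x)
          (EuclideanSpace.single i (1:ℝ))) i = 0
  init : ∀ x : Ed d, m x 0 = S.m₀ x
  term : ∀ x : Ed d, u x S.T = S.g x (m x S.T)

end EMFG

namespace EMFG

/-- The congestion Hamiltonian `H(x,p,m) = |p|²/(2(m+c₀)^α) − V(x) − f(m)`. -/
def congH {d : ℕ} (α c₀ : ℝ) (V : Ed d → ℝ) (f : ℝ → ℝ) :
    Ed d → Ed d → ℝ → ℝ :=
  fun x p m => ‖p‖ ^ 2 / (2 * (m + c₀) ^ α) - V x - f m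

/-- The congestion drift `B(x,p,m) = m p/(m+c₀)^α`. -/
def congB {d : ℕ} (α c₀ : ℝ) : Ed d → Ed d → ℝ → Ed d :=
  fun _ p m => (m / (m + c₀) ^ α) • p

lemma congH_gradp {d : ℕ} (α c₀ : ℝ) (V : Ed d → ℝ) (f : ℝ → ℝ) (x p : Ed d) (m : ℝ)
    (hs : 0 < m + c₀) :
    gradp (congH α c₀ V f) x p m = (((m + c₀) ^ α)⁻¹) • p := by
  have hA : (0:ℝ) < (m + c₀) ^ α := Real.rpow_pos_of_pos hs α
  apply HasGradientAt.gradient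
  rw [hasGradientAt_iff_hasFDerivAt]
  have h1 : HasFDerivAt (fun p' : Ed d => ‖p'‖ ^ 2) (2 • (innerSL ℝ p)) p := by
    simpa using (hasFDerivAt_id p).norm_sq
  have h3 : HasFDerivAt (fun p' : Ed d => ‖p'‖ ^ 2 / (2 * (m + c₀) ^ α) - V x - f m)
      (((2 * (m + c₀) ^ α)⁻¹ : ℝ) • (2 • (innerSL ℝ p))) p := by
    simpa [div_eq_mul_inv] using
      ((h1.mul_const ((2 * (m + c₀) ^ α)⁻¹)).sub_const (V x)).sub_const (f m)
  refine h3.congr_fderiv ?_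
  ext y
  simp only [InnerProductSpace.toDual_apply_apply, ContinuousLinearMap.coe_smul',
    Pi.smul_apply, ContinuousLinearMap.smul_apply, innerSL_apply_apply,
    real_inner_smul_left, smul_eq_mul]
  field_simp
  ring

lemma congH_dm {d : ℕ} (α c₀ : ℝ) (V : Ed d → ℝ) (f f' : ℝ → ℝ) (x p : Ed d) (m : ℝ)
    (hf : HasDerivAt f (f' m) m) (hs : 0 < m + c₀) :
    dm (congH α c₀ V f) x p m =
      -(α * ‖p‖ ^ 2 / (2 * ((m + c₀) ^ α * (m + c₀)))) - f' m := by
  have hA : (0:ℝ) < (m + c₀) ^ α := Real.rpow_pos_of_pos hs α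
  have hu : HasDerivAt (fun m' : ℝ => m' + c₀) 1 m := (hasDerivAt_id m).add_const c₀
  have hr : HasDerivAt (fun m' : ℝ => (m' + c₀) ^ α) (1 * α * (m + c₀) ^ (α - 1)) m :=
    hu.rpow_const (Or.inl hs.ne')
  have h2 : HasDerivAt (fun m' : ℝ => 2 * (m' + c₀) ^ α)
      (2 * (1 * α * (m + c₀) ^ (α - 1))) m := hr.const_mul 2
  have h3 := (((hasDerivAt_const m (‖p‖ ^ 2)).div h2
    (by positivity : (2 : ℝ) * (m + c₀) ^ α ≠ 0)).sub_const (V x)).sub hf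
  rw [dm, show (fun m' => congH α c₀ V f x p m') =
    (fun m' => ‖p‖ ^ 2 / (2 * (m' + c₀) ^ α) - V x - f m') from rfl,
    (show HasDerivAt (fun m' => ‖p‖ ^ 2 / (2 * (m' + c₀) ^ α) - V x - f m') _ m from h3).deriv]
  have hpow : (m + c₀) ^ (α - 1) = (m + c₀) ^ α / (m + c₀) := by
    rw [Real.rpow_sub hs, Real.rpow_one]
  rw [hpow]
  field_simp
  ring

lemma congB_vdm {d : ℕ} (α c₀ : ℝ) (x p : Ed d) (m : ℝ) (hs : 0 < m + c₀) :
    vdm (congB α c₀) x p m =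
      (((m + c₀) ^ α)⁻¹ - α * m / ((m + c₀) ^ α * (m + c₀))) • p := by
  have hA : (0:ℝ) < (m + c₀) ^ α := Real.rpow_pos_of_pos hs α
  have hu : HasDerivAt (fun m' : ℝ => m' + c₀) 1 m := (hasDerivAt_id m).add_const c₀
  have hr : HasDerivAt (fun m' : ℝ => (m' + c₀) ^ α) (1 * α * (m + c₀) ^ (α - 1)) m :=
    hu.rpow_const (Or.inl hs.ne')
  have hg : HasDerivAt (fun m' : ℝ => m' / (m' + c₀) ^ α)
      ((1 * (m + c₀) ^ α - m * (1 * α * (m + c₀) ^ (α - 1))) / ((m + c₀) ^ α) ^ 2) m :=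
    (hasDerivAt_id m).div hr hA.ne'
  have h := hg.smul_const p
  rw [vdm, show (fun m' => congB α c₀ x p m') =
    (fun m' : ℝ => (m' / (m' + c₀) ^ α) • p) from rfl, h.deriv]
  congr 1
  have hpow : (m + c₀) ^ (α - 1) = (m + c₀) ^ α / (m + c₀) := by
    rw [Real.rpow_sub hs, Real.rpow_one]
  rw [hpow]
  field_simp

lemma congB_jacp {d : ℕ} (α c₀ : ℝ) (x p : Ed d) (m : ℝ) (ξ : Ed d) :
    jacp (congB α c₀) x p m ξ = (m / (m + c₀) ^ α) • ξ := by
  have h : HasFDerivAt (fun p' : Ed d => (m / (m + c₀) ^ α) • p')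
      ((m / (m + c₀) ^ α) • ContinuousLinearMap.id ℝ (Ed d)) p :=
    (hasFDerivAt_id p).const_smul (m / (m + c₀) ^ α)
  rw [jacp, show (fun p' => congB α c₀ x p' m) =
    (fun p' : Ed d => (m / (m + c₀) ^ α) • p') from rfl, h.fderiv]
  simp

lemma cong_key_ineq (α c₀ m F t P X : ℝ) (hα0 : 0 < α) (hα2 : α < 2) (hc₀ : 0 ≤ c₀)
    (hm : 0 < m) (hF : 0 < F) (hX : 0 < X) (hP : 0 ≤ P) (ht2 : t ^ 2 ≤ P ^ 2 * X ^ 2) :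
    α ^ 2 * m ^ 2 * t ^ 2 <
      2 * α * m * (m + c₀) * (P ^ 2 * X ^ 2) +
        4 * F * m * (m + c₀) ^ α * (m + c₀) ^ 2 * X ^ 2 := by
  have hs : 0 < m + c₀ := by linarith
  have hA : (0:ℝ) < (m + c₀) ^ α := Real.rpow_pos_of_pos hs α
  have c1 : α ^ 2 * m ^ 2 * t ^ 2 ≤ 2 * α * m * (m + c₀) * (P ^ 2 * X ^ 2) := by
    nlinarith [mul_nonneg (mul_nonneg (mul_nonneg hα0.le hα0.le) (mul_nonneg hm.le hm.le)) (sub_nonneg.mpr ht2),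
      mul_nonneg (mul_nonneg (mul_nonneg hα0.le hc₀)
        (mul_nonneg (sq_nonneg P) (sq_nonneg X))) (mul_nonneg hα0.le hm.le),
      mul_nonneg (mul_nonneg (mul_nonneg (by linarith : (0:ℝ) ≤ 2 - α) hα0.le)
        (mul_nonneg hm.le hs.le)) (mul_nonneg (sq_nonneg P) (sq_nonneg X))]
  have c2 : 0 < 4 * F * m * (m + c₀) ^ α * (m + c₀) ^ 2 * X ^ 2 := by positivity
  linarith

/-- for `0 < α < 2`, `c₀ ≥ 0` and `f' > 0`, the congestion model
satisfies the strict Lions–Souganidis uniqueness condition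
`−4H_m D_pB > (B_m − D_pH)⊗(B_m − D_pH)`. -/
theorem congestion_uniqueness_condition (d : ℕ) (hd : 1 ≤ d) (α c₀ : ℝ)
    (hα0 : 0 < α) (hα2 : α < 2) (hc₀ : 0 ≤ c₀)
    (f f' : ℝ → ℝ) (hf : ∀ m : ℝ, 0 < m → HasDerivAt f (f' m) m)
    (hf' : ∀ m : ℝ, 0 < m → 0 < f' m) (V : Ed d → ℝ) :
    ∀ (x p : Ed d) (m : ℝ), 0 < m → ∀ ξ : Ed d, ξ ≠ 0 →
      ((dotE (vdm (congB α c₀) x p m - gradp (congH α c₀ V f) x p m) ξ) ^ 2 <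
        -(4 * dm (congH α c₀ V f) x p m) * dotE (jacp (congB α c₀) x p m ξ) ξ) ∧
      (α ^ 2 * m ^ 2 * (dotE p ξ) ^ 2 / (m + c₀) ^ (2 * α + 2) <
        2 * α * m * ‖p‖ ^ 2 * ‖ξ‖ ^ 2 / (m + c₀) ^ (2 * α + 1) +
          4 * f' m * m * ‖ξ‖ ^ 2 / (m + c₀) ^ α) := by
  intro x p m hm ξ hξ
  have hs : 0 < m + c₀ := by linarith
  have hA : (0:ℝ) < (m + c₀) ^ α := Real.rpow_pos_of_pos hs α
  have hXpos : 0 < ‖ξ‖ := norm_pos_iff.mpr hξ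
  have hF : 0 < f' m := hf' m hm
  have ht2 : (dotE p ξ) ^ 2 ≤ ‖p‖ ^ 2 * ‖ξ‖ ^ 2 := by
    have h1 : |dotE p ξ| ≤ ‖p‖ * ‖ξ‖ := abs_real_inner_le_norm p ξ
    nlinarith [abs_nonneg (dotE p ξ), sq_abs (dotE p ξ), norm_nonneg p, norm_nonneg ξ]
  have key := cong_key_ineq α c₀ m (f' m) (dotE p ξ) ‖p‖ ‖ξ‖ hα0 hα2 hc₀ hm hF hXpos
    (norm_nonneg p) ht2
  constructor
  · rw [congB_vdm α c₀ x p m hs, congH_gradp α c₀ V f x p m hs,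
      congH_dm α c₀ V f f' x p m (hf m hm) hs, congB_jacp, ← sub_smul,
      show (((m + c₀) ^ α)⁻¹ - α * m / ((m + c₀) ^ α * (m + c₀)) - ((m + c₀) ^ α)⁻¹)
        = -(α * m) / ((m + c₀) ^ α * (m + c₀)) from by ring]
    have e2 : dotE ((-(α * m) / ((m + c₀) ^ α * (m + c₀))) • p) ξ
        = (-(α * m) / ((m + c₀) ^ α * (m + c₀))) * dotE p ξ := real_inner_smul_left _ _ _
    have e3 : dotE ((m / (m + c₀) ^ α) • ξ) ξ = (m / (m + c₀) ^ α) * ‖ξ‖ ^ 2 := by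
      rw [dotE, real_inner_smul_left, real_inner_self_eq_norm_sq]
    rw [e2, e3, ← sub_pos]
    have expand : -(4 * (-(α * ‖p‖ ^ 2 / (2 * ((m + c₀) ^ α * (m + c₀)))) - f' m)) *
          (m / (m + c₀) ^ α * ‖ξ‖ ^ 2) -
        (-(α * m) / ((m + c₀) ^ α * (m + c₀)) * dotE p ξ) ^ 2 =
        (2 * α * m * (m + c₀) * (‖p‖ ^ 2 * ‖ξ‖ ^ 2) +
            4 * f' m * m * (m + c₀) ^ α * (m + c₀) ^ 2 * ‖ξ‖ ^ 2 -
          α ^ 2 * m ^ 2 * (dotE p ξ) ^ 2) / (((m + c₀) ^ α) ^ 2 * (m + c₀) ^ 2) := by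
      field_simp
      ring
    rw [expand]
    exact div_pos (by linarith) (by positivity)
  · have e1 : (m + c₀) ^ (2 * α + 1) = (m + c₀) ^ α * ((m + c₀) ^ α * (m + c₀)) := by
      rw [show 2 * α + 1 = α + (α + 1) by ring, Real.rpow_add hs, Real.rpow_add hs,
        Real.rpow_one]
    have e2 : (m + c₀) ^ (2 * α + 2) =
        (m + c₀) ^ α * ((m + c₀) ^ α * ((m + c₀) * (m + c₀))) := by
      rw [show 2 * α + 2 = α + (α + (1 + 1)) by ring, Real.rpow_add hs, Real.rpow_add hs,
        Real.rpow_add hs, Real.rpow_one]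
    rw [e1, e2, ← sub_pos]
    have expand : 2 * α * m * ‖p‖ ^ 2 * ‖ξ‖ ^ 2 /
          ((m + c₀) ^ α * ((m + c₀) ^ α * (m + c₀))) +
        4 * f' m * m * ‖ξ‖ ^ 2 / (m + c₀) ^ α -
        α ^ 2 * m ^ 2 * (dotE p ξ) ^ 2 /
          ((m + c₀) ^ α * ((m + c₀) ^ α * ((m + c₀) * (m + c₀)))) =
        (2 * α * m * (m + c₀) * (‖p‖ ^ 2 * ‖ξ‖ ^ 2) +
            4 * f' m * m * (m + c₀) ^ α * (m + c₀) ^ 2 * ‖ξ‖ ^ 2 -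
          α ^ 2 * m ^ 2 * (dotE p ξ) ^ 2) / (((m + c₀) ^ α) ^ 2 * (m + c₀) ^ 2) := by
      field_simp
    rw [expand]
    exact div_pos (by linarith) (by positivity)

end EMFG
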